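/- (Relationship between PGB and RPB) Fix γ ∈ (0,1], a finite index set T, symmetric matrices H_t ∈ ℝ^{d×d} (t ∈ T), and λ₀, λ₁ > 0. Let M₀* be optimal for λ₀ (M₀* ⪰ O minimizes P_{λ₀} over positive semi-definite matrices) and set Q := M₀* − (1/(2λ₁))∇P_{λ₁}(M₀*). Then the PGB sphere for λ₁ with reference solution M₀* coincides with the RPB sphere: [Q]_+ = ((λ₀+λ₁)/(2λ₁))·M₀* and ((1/(2λ₁))‖∇P_{λ₁}(M₀*)‖_F)² − ‖[Q]_−‖_F² = ((λ₀−λ₁)²/(4λ₁²))·‖M₀*‖_F². -/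

import Mathlib

open scoped BigOperators
open scoped Matrix

/-- Frobenius inner product ⟨A,B⟩ = tr(Aᵀ B). -/
noncomputable def frob {d : ℕ} (A B : Matrix (Fin d) (Fin d) ℝ) : ℝ :=
  Matrix.trace (Aᵀ * B)

/-- Frobenius norm ‖A‖_F = √⟨A,A⟩. -/
noncomputable def frobNorm {d : ℕ} (A : Matrix (Fin d) (Fin d) ℝ) : ℝ :=
  Real.sqrt (frob A A)

/-- Smoothed hinge loss ℓ_γ. -/
noncomputable def shinge (γ x : ℝ) : ℝ :=
  if 1 < x then 0 else if 1 - γ ≤ x then (1 - x) ^ 2 / (2 * γ) else 1 - x - γ / 2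

/-- Derivative of the smoothed hinge loss ℓ_γ'. -/
noncomputable def shinge' (γ x : ℝ) : ℝ :=
  if 1 < x then 0 else if 1 - γ ≤ x then -(1 - x) / γ else -1

/-- Primal objective P_λ(M) = Σ_t ℓ_γ(⟨M,H_t⟩) + (λ/2)‖M‖_F². -/
noncomputable def Pobj {d : ℕ} {ι : Type*} (γ lam : ℝ) (T : Finset ι)
    (H : ι → Matrix (Fin d) (Fin d) ℝ) (M : Matrix (Fin d) (Fin d) ℝ) : ℝ :=
  (∑ t ∈ T, shinge γ (frob M (H t))) + lam / 2 * frobNorm M ^ 2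

/-- Gradient ∇P_λ(M) = Σ_t ℓ_γ'(⟨M,H_t⟩) H_t + λ M. -/
noncomputable def gradP {d : ℕ} {ι : Type*} (γ lam : ℝ) (T : Finset ι)
    (H : ι → Matrix (Fin d) (Fin d) ℝ) (M : Matrix (Fin d) (Fin d) ℝ) :
    Matrix (Fin d) (Fin d) ℝ :=
  (∑ t ∈ T, shinge' γ (frob M (H t)) • H t) + lam • M

/-! ### Auxiliary lemmas about the Frobenius inner product -/

lemma frob_eq_sum {d : ℕ} (A B : Matrix (Fin d) (Fin d) ℝ) :
    frob A B = ∑ i, ∑ j, A i j * B i j := by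
  simp [frob, Matrix.trace, Matrix.diag, Matrix.mul_apply]
  exact Finset.sum_comm

lemma frob_comm {d : ℕ} (A B : Matrix (Fin d) (Fin d) ℝ) : frob A B = frob B A := by
  simp [frob_eq_sum, mul_comm]

lemma frob_add_left {d : ℕ} (A B C : Matrix (Fin d) (Fin d) ℝ) :
    frob (A + B) C = frob A C + frob B C := by
  simp [frob_eq_sum, Matrix.add_apply, add_mul, Finset.sum_add_distrib]

lemma frob_smul_left {d : ℕ} (c : ℝ) (A B : Matrix (Fin d) (Fin d) ℝ) :
    frob (c • A) B = c * frob A B := by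
  simp [frob_eq_sum, Matrix.smul_apply, Finset.mul_sum, mul_assoc]

lemma frob_add_right {d : ℕ} (A B C : Matrix (Fin d) (Fin d) ℝ) :
    frob A (B + C) = frob A B + frob A C := by
  rw [frob_comm, frob_add_left, frob_comm B, frob_comm C]

lemma frob_smul_right {d : ℕ} (c : ℝ) (A B : Matrix (Fin d) (Fin d) ℝ) :
    frob A (c • B) = c * frob A B := by
  rw [frob_comm, frob_smul_left, frob_comm]

lemma frob_sub_left {d : ℕ} (A B C : Matrix (Fin d) (Fin d) ℝ) :
    frob (A - B) C = frob A C - frob B C := by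
  simp [frob_eq_sum, Matrix.sub_apply, sub_mul, Finset.sum_sub_distrib]

lemma frob_sub_right {d : ℕ} (A B C : Matrix (Fin d) (Fin d) ℝ) :
    frob A (B - C) = frob A B - frob A C := by
  rw [frob_comm, frob_sub_left, frob_comm B, frob_comm C]

lemma frob_sum_left {d : ℕ} {ι : Type*} (T : Finset ι) (f : ι → Matrix (Fin d) (Fin d) ℝ)
    (B : Matrix (Fin d) (Fin d) ℝ) :
    frob (∑ t ∈ T, f t) B = ∑ t ∈ T, frob (f t) B := by
  classical
  induction T using Finset.induction with
  | empty => simp [frob_eq_sum]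
  | insert _ _ h ih => rw [Finset.sum_insert h, frob_add_left, ih, Finset.sum_insert h]

lemma frob_self_nonneg {d : ℕ} (A : Matrix (Fin d) (Fin d) ℝ) : 0 ≤ frob A A := by
  rw [frob_eq_sum]
  exact Finset.sum_nonneg fun i _ => Finset.sum_nonneg fun j _ => mul_self_nonneg _

lemma eq_zero_of_frob_self {d : ℕ} {A : Matrix (Fin d) (Fin d) ℝ} (h : frob A A = 0) :
    A = 0 := by
  rw [frob_eq_sum] at h
  ext i j
  have h1 : ∀ i ∈ Finset.univ, (0:ℝ) ≤ ∑ j, A i j * A i j :=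
    fun i _ => Finset.sum_nonneg fun j _ => mul_self_nonneg _
  have h2 := (Finset.sum_eq_zero_iff_of_nonneg h1).mp h i (Finset.mem_univ i)
  have h3 := (Finset.sum_eq_zero_iff_of_nonneg
    (fun j _ => mul_self_nonneg (A i j))).mp h2 j (Finset.mem_univ j)
  simpa [mul_self_eq_zero] using h3

lemma frobNorm_sq {d : ℕ} (A : Matrix (Fin d) (Fin d) ℝ) :
    frobNorm A ^ 2 = frob A A := Real.sq_sqrt (frob_self_nonneg A)

/-! ### Positive semidefinite matrices and the Frobenius inner product -/

open scoped MatrixOrder in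
lemma psd_eq_transpose_mul_self {d : ℕ} {A : Matrix (Fin d) (Fin d) ℝ} (hA : A.PosSemidef) :
    ∃ B : Matrix (Fin d) (Fin d) ℝ, A = Bᴴ * B := by
  obtain ⟨B, hB⟩ := CStarAlgebra.nonneg_iff_eq_star_mul_self.mp hA.nonneg
  exact ⟨B, hB⟩

lemma frob_nonneg_of_psd {d : ℕ} {A B : Matrix (Fin d) (Fin d) ℝ}
    (hA : A.PosSemidef) (hB : B.PosSemidef) : 0 ≤ frob A B := by
  obtain ⟨P, hP⟩ := psd_eq_transpose_mul_self hA
  obtain ⟨R, hR⟩ := psd_eq_transpose_mul_self hB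
  have hAt : Aᵀ = A := by
    have := hA.isHermitian
    rwa [Matrix.IsHermitian, Matrix.conjTranspose_eq_transpose_of_trivial] at this
  have key : frob A B = frob (R * Pᵀ) (R * Pᵀ) := by
    rw [frob, frob, hAt, hP, hR]
    rw [Matrix.transpose_mul, Matrix.transpose_transpose]
    rw [Matrix.conjTranspose_eq_transpose_of_trivial, Matrix.conjTranspose_eq_transpose_of_trivial]
    rw [show (Pᵀ * P * (Rᵀ * R) : Matrix (Fin d) (Fin d) ℝ) = Pᵀ * (P * Rᵀ * R) by noncomm_ring]
    rw [Matrix.trace_mul_comm]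
    congr 1
    noncomm_ring
  rw [key]
  exact frob_self_nonneg _

lemma psd_of_dual {d : ℕ} {S : Matrix (Fin d) (Fin d) ℝ} (hS : S.IsSymm)
    (h : ∀ X : Matrix (Fin d) (Fin d) ℝ, X.PosSemidef → 0 ≤ frob S X) :
    S.PosSemidef := by
  refine Matrix.PosSemidef.of_dotProduct_mulVec_nonneg ?_ ?_
  · rwa [Matrix.IsHermitian, Matrix.conjTranspose_eq_transpose_of_trivial, ← Matrix.IsSymm]
  · intro x
    set X : Matrix (Fin d) (Fin d) ℝ := Matrix.of fun i j => x i * x j with hXdef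
    have hX : X.PosSemidef := by
      refine Matrix.PosSemidef.of_dotProduct_mulVec_nonneg ?_ ?_
      · rw [Matrix.IsHermitian, Matrix.conjTranspose_eq_transpose_of_trivial]
        ext i j
        simp [hXdef, Matrix.transpose_apply, mul_comm]
      · intro y
        have e1 : star y ⬝ᵥ (X *ᵥ y) = ∑ i, ∑ j, (x i * y i) * (x j * y j) := by
          simp only [dotProduct, Matrix.mulVec, star_trivial, hXdef, Matrix.of_apply]
          refine Finset.sum_congr rfl fun i _ => ?_
          rw [Finset.mul_sum]
          refine Finset.sum_congr rfl fun j _ => ?_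
          ring
        rw [e1, ← Finset.sum_mul_sum]
        exact mul_self_nonneg _
    have e2 : star x ⬝ᵥ (S *ᵥ x) = frob S X := by
      rw [frob_eq_sum]
      simp only [dotProduct, Matrix.mulVec, star_trivial, hXdef, Matrix.of_apply]
      refine Finset.sum_congr rfl fun i _ => ?_
      rw [Finset.mul_sum]
      refine Finset.sum_congr rfl fun j _ => ?_
      ring
    rw [e2]
    exact h X hX

lemma psd_smul {d : ℕ} {A : Matrix (Fin d) (Fin d) ℝ} (hA : A.PosSemidef) {c : ℝ}
    (hc : 0 ≤ c) : (c • A).PosSemidef := by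
  refine Matrix.PosSemidef.of_dotProduct_mulVec_nonneg ?_ ?_
  · have hAt := hA.isHermitian
    rw [Matrix.IsHermitian, Matrix.conjTranspose_eq_transpose_of_trivial] at hAt ⊢
    rw [Matrix.transpose_smul, hAt]
  · intro x
    have : star x ⬝ᵥ ((c • A) *ᵥ x) = c * (star x ⬝ᵥ (A *ᵥ x)) := by
      rw [Matrix.smul_mulVec, dotProduct_smul]
      simp
    rw [this]
    exact mul_nonneg hc (hA.dotProduct_mulVec_nonneg x)

/-! ### Smoothness of the smoothed hinge loss -/

lemma shinge_smooth {γ : ℝ} (hγ : 0 < γ) (x h : ℝ) :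
    shinge γ (x + h) ≤ shinge γ x + shinge' γ x * h + h ^ 2 / (2 * γ) := by
  have hγ' : (0:ℝ) < 2 * γ := by linarith
  have hne : γ ≠ 0 := ne_of_gt hγ
  unfold shinge shinge'
  split_ifs with c1 c2 c3 c4 c5 c6 c7 c8
  · have p : (0:ℝ) ≤ h ^ 2 / (2 * γ) := by positivity
    linarith
  · have e : (1 - x) ^ 2 / (2 * γ) + -(1 - x) / γ * h + h ^ 2 / (2 * γ)
        = ((1 - x) - h) ^ 2 / (2 * γ) := by field_simp; ring
    have p : (0:ℝ) ≤ ((1 - x) - h) ^ 2 / (2 * γ) := by positivity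
    linarith
  · have e : (h - γ) ^ 2 / (2 * γ) = h ^ 2 / (2 * γ) - h + γ / 2 := by field_simp; ring
    have p : (0:ℝ) ≤ (h - γ) ^ 2 / (2 * γ) := by positivity
    linarith
  · have k : (1 - (x + h)) ^ 2 / (2 * γ) ≤ h ^ 2 / (2 * γ) := by
      rw [div_le_div_iff₀ hγ' hγ']
      nlinarith [mul_nonneg (mul_nonneg (by linarith : (0:ℝ) ≤ x - 1)
        (by linarith : (0:ℝ) ≤ 1 - (x + h) - h)) hγ.le]
    linarith
  · have e : (1 - x) ^ 2 / (2 * γ) + -(1 - x) / γ * h + h ^ 2 / (2 * γ)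
        = (1 - (x + h)) ^ 2 / (2 * γ) := by field_simp; ring
    linarith
  · have e : 1 - x - γ / 2 + -1 * h + h ^ 2 / (2 * γ) - (1 - (x + h)) ^ 2 / (2 * γ)
        = (h ^ 2 - (γ - (1 - x - h)) ^ 2) / (2 * γ) := by field_simp; ring
    have p : (0:ℝ) ≤ (h ^ 2 - (γ - (1 - x - h)) ^ 2) / (2 * γ) := by
      apply div_nonneg ?_ (le_of_lt hγ')
      nlinarith [mul_nonneg (by linarith : (0:ℝ) ≤ h - (γ - (1 - x - h)))
        (by linarith : (0:ℝ) ≤ h + (γ - (1 - x - h)))]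
    linarith
  · have k : -h - γ / 2 ≤ h ^ 2 / (2 * γ) := by
      rw [le_div_iff₀ hγ']; nlinarith [sq_nonneg (h + γ)]
    linarith
  · have e : (1 - x) ^ 2 / (2 * γ) + -(1 - x) / γ * h + h ^ 2 / (2 * γ)
        = (1 - (x + h)) ^ 2 / (2 * γ) := by field_simp; ring
    have k : 1 - (x + h) - γ / 2 ≤ (1 - (x + h)) ^ 2 / (2 * γ) := by
      rw [le_div_iff₀ hγ']
      nlinarith [sq_nonneg (1 - (x + h) - γ)]
    linarith
  · have p : (0:ℝ) ≤ h ^ 2 / (2 * γ) := by positivity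
    linarith

/-- Relationship between PGB and RPB: the PGB sphere for λ₁ with the optimal
solution for λ₀ as reference coincides with the RPB sphere.  Here
Qplus = [Q]_+ and Qminus = [Q]_− are given through the unique orthogonal
PSD/NSD decomposition of Q = M₀* − (1/(2λ₁))∇P_{λ₁}(M₀*). -/
theorem pgb_eq_rpb {d : ℕ} {ι : Type*} (γ lam0 lam1 : ℝ)
    (hγ : 0 < γ) (hγ1 : γ ≤ 1) (hlam0 : 0 < lam0) (hlam1 : 0 < lam1)
    (T : Finset ι) (H : ι → Matrix (Fin d) (Fin d) ℝ)
    (hH : ∀ t ∈ T, (H t).IsSymm)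
    (M0star Qplus Qminus : Matrix (Fin d) (Fin d) ℝ)
    (hM0 : M0star.PosSemidef)
    (hopt0 : ∀ M' : Matrix (Fin d) (Fin d) ℝ, M'.PosSemidef →
      Pobj γ lam0 T H M0star ≤ Pobj γ lam0 T H M')
    (hdecomp : M0star - (1 / (2 * lam1)) • gradP γ lam1 T H M0star = Qplus + Qminus)
    (hplus : Qplus.PosSemidef) (hminus : (-Qminus).PosSemidef)
    (horth : frob Qplus Qminus = 0) :
    Qplus = ((lam0 + lam1) / (2 * lam1)) • M0star ∧
    ((1 / (2 * lam1)) * frobNorm (gradP γ lam1 T H M0star)) ^ 2 -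
        frobNorm Qminus ^ 2 =
      (lam0 - lam1) ^ 2 / (4 * lam1 ^ 2) * frobNorm M0star ^ 2 := by
  classical
  set g0 : Matrix (Fin d) (Fin d) ℝ := gradP γ lam0 T H M0star with hg0
  set g1 : Matrix (Fin d) (Fin d) ℝ := gradP γ lam1 T H M0star with hg1
  have hl1 : (2 * lam1 : ℝ) ≠ 0 := by positivity
  -- the smoothness upper bound on the objective
  have hbound : ∀ (D : Matrix (Fin d) (Fin d) ℝ) (s : ℝ),
      Pobj γ lam0 T H (M0star + s • D) ≤ Pobj γ lam0 T H M0star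
        + s * frob g0 D
        + s ^ 2 * ((∑ t ∈ T, frob D (H t) ^ 2 / (2 * γ)) + lam0 / 2 * frob D D) := by
    intro D s
    have hfr : ∀ t, frob (M0star + s • D) (H t)
        = frob M0star (H t) + s * frob D (H t) := by
      intro t
      rw [frob_add_left, frob_smul_left]
    have hsum : ∀ t ∈ T, shinge γ (frob (M0star + s • D) (H t))
        ≤ shinge γ (frob M0star (H t))
          + shinge' γ (frob M0star (H t)) * (s * frob D (H t))
          + (s * frob D (H t)) ^ 2 / (2 * γ) := by
      intro t _
      rw [hfr t]
      exact shinge_smooth hγ _ _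
    have hquad : frobNorm (M0star + s • D) ^ 2
        = frobNorm M0star ^ 2 + 2 * s * frob M0star D + s ^ 2 * frob D D := by
      rw [frobNorm_sq, frobNorm_sq, frob_add_left, frob_add_right, frob_add_right,
        frob_smul_left, frob_smul_right, frob_smul_left, frob_smul_right,
        frob_comm D M0star]
      ring
    have hgd : frob g0 D
        = (∑ t ∈ T, shinge' γ (frob M0star (H t)) * frob D (H t)) + lam0 * frob M0star D := by
      rw [hg0, gradP, frob_add_left, frob_sum_left, frob_smul_left]
      congr 1
      refine Finset.sum_congr rfl fun t _ => ?_
      rw [frob_smul_left, frob_comm (H t) D]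
    rw [Pobj, Pobj, hquad, hgd]
    have h1 := Finset.sum_le_sum hsum
    have e1 : ∑ t ∈ T, (shinge γ (frob M0star (H t))
          + shinge' γ (frob M0star (H t)) * (s * frob D (H t))
          + (s * frob D (H t)) ^ 2 / (2 * γ))
        = (∑ t ∈ T, shinge γ (frob M0star (H t)))
          + s * (∑ t ∈ T, shinge' γ (frob M0star (H t)) * frob D (H t))
          + s ^ 2 * (∑ t ∈ T, frob D (H t) ^ 2 / (2 * γ)) := by
      rw [Finset.sum_add_distrib, Finset.sum_add_distrib, Finset.mul_sum, Finset.mul_sum]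
      congr 1
      · congr 1
        refine Finset.sum_congr rfl fun t _ => by ring
      · refine Finset.sum_congr rfl fun t _ => by field_simp
    rw [e1] at h1
    nlinarith [h1]
  -- KKT condition
  have kkt : ∀ X : Matrix (Fin d) (Fin d) ℝ, X.PosSemidef →
      0 ≤ frob g0 (X - M0star) := by
    intro X hX
    set D : Matrix (Fin d) (Fin d) ℝ := X - M0star with hD
    set C : ℝ := (∑ t ∈ T, frob D (H t) ^ 2 / (2 * γ)) + lam0 / 2 * frob D D with hC
    have hCnn : 0 ≤ C := by
      apply add_nonneg
      · exact Finset.sum_nonneg fun t _ => by positivity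
      · exact mul_nonneg (by positivity) (frob_self_nonneg D)
    have hstep : ∀ s : ℝ, 0 < s → s ≤ 1 → 0 ≤ frob g0 D + s * C := by
      intro s hs hs1
      have hpsd : (M0star + s • D).PosSemidef := by
        have e : M0star + s • D = (1 - s) • M0star + s • X := by
          rw [hD]
          ext i j
          simp [Matrix.add_apply, Matrix.smul_apply, Matrix.sub_apply]
          ring
        rw [e]
        exact (psd_smul hM0 (by linarith)).add (psd_smul hX hs.le)
      have h2 := hopt0 _ hpsd
      have h3 := hbound D s
      have h4 : 0 ≤ s * frob g0 D + s ^ 2 * C := by rw [hC]; linarith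
      have h5 : 0 ≤ s * (frob g0 D + s * C) := by nlinarith
      exact nonneg_of_mul_nonneg_right h5 hs
    by_contra hneg
    push_neg at hneg
    set g : ℝ := frob g0 D with hgdef
    set s : ℝ := min 1 (-g / (2 * (C + 1))) with hs
    have hspos : 0 < s := by
      apply lt_min one_pos
      apply div_pos (by linarith) (by linarith)
    have hs1 : s ≤ 1 := min_le_left _ _
    have h6 := hstep s hspos hs1
    have h7 : s * C ≤ -g / 2 := by
      calc s * C ≤ (-g / (2 * (C + 1))) * C := by
            apply mul_le_mul_of_nonneg_right (min_le_right _ _) hCnn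
        _ ≤ -g / 2 := by
            rw [div_mul_eq_mul_div, div_le_div_iff₀ (by linarith) (by norm_num)]
            nlinarith
    clear_value D C g s
    nlinarith [h6, h7, hneg]
  -- the gradient at lam0 is symmetric
  have hM0symm : M0star.IsSymm := by
    have := hM0.isHermitian
    rwa [Matrix.IsHermitian, Matrix.conjTranspose_eq_transpose_of_trivial,
      ← Matrix.IsSymm] at this
  have hg0symm : g0.IsSymm := by
    rw [hg0, gradP, Matrix.IsSymm, Matrix.transpose_add, Matrix.transpose_smul,
      hM0symm.eq, Matrix.transpose_sum]
    congr 1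
    refine Finset.sum_congr rfl fun t ht => ?_
    rw [Matrix.transpose_smul, (hH t ht).eq]
  -- first-order conditions
  have h1 : frob g0 M0star = 0 := by
    have ha := kkt (M0star + M0star) (hM0.add hM0)
    rw [add_sub_cancel_right] at ha
    have hb := kkt 0 Matrix.PosSemidef.zero
    rw [zero_sub, show frob g0 (-M0star) = frob g0 (0 - M0star) by rw [zero_sub],
      frob_sub_right] at hb
    have : frob g0 (0 : Matrix (Fin d) (Fin d) ℝ) = 0 := by
      simp [frob_eq_sum]
    linarith
  have h2 : ∀ X : Matrix (Fin d) (Fin d) ℝ, X.PosSemidef → 0 ≤ frob g0 X := by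
    intro X hX
    have := kkt X hX
    rw [frob_sub_right, h1] at this
    linarith
  -- the candidate decomposition
  set P : Matrix (Fin d) (Fin d) ℝ := ((lam0 + lam1) / (2 * lam1)) • M0star with hP
  set N : Matrix (Fin d) (Fin d) ℝ := (-(1 / (2 * lam1))) • g0 with hN
  have hQeq : Qplus + Qminus = P + N := by
    rw [← hdecomp, hP, hN, hg0, hg1, gradP, gradP]
    ext i j
    simp only [Matrix.sub_apply, Matrix.add_apply, Matrix.smul_apply, Matrix.neg_apply,
      smul_eq_mul, Matrix.sum_apply]
    field_simp
    ring
  have hPpsd : P.PosSemidef := psd_smul hM0 (by positivity)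
  have hNnsd : (-N).PosSemidef := by
    have e : -N = (1 / (2 * lam1)) • g0 := by
      rw [hN]; ext i j; simp
    rw [e]
    apply psd_of_dual
    · rw [Matrix.IsSymm, Matrix.transpose_smul, hg0symm.eq]
    · intro X hX
      rw [frob_smul_left]
      exact mul_nonneg (by positivity) (h2 X hX)
  -- uniqueness of the decomposition
  have hdiff : Qplus - P = N - Qminus := by
    rw [sub_eq_sub_iff_add_eq_add, hQeq]
    abel
  have hDzero : Qplus - P = 0 := by
    apply eq_zero_of_frob_self
    have hexp : frob (Qplus - P) (Qplus - P) = frob (Qplus - P) (N - Qminus) := by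
      rw [hdiff]
    rw [hexp, frob_sub_left, frob_sub_right, frob_sub_right]
    have t1 : frob Qplus N ≤ 0 := by
      rw [hN, frob_smul_right]
      have := h2 Qplus hplus
      rw [frob_comm] at this
      nlinarith [this, (by positivity : (0:ℝ) < 1 / (2 * lam1))]
    have t2 : frob P N = 0 := by
      rw [hP, hN, frob_smul_left, frob_smul_right, frob_comm M0star g0, h1]
      ring
    have t3 : 0 ≤ frob P Qminus → False ∨ True := fun _ => Or.inr trivial
    have t4 : frob P Qminus ≤ 0 := by
      have hnn : 0 ≤ frob M0star (-Qminus) := frob_nonneg_of_psd hM0 hminus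
      have e : frob M0star (-Qminus) = -frob M0star Qminus := by
        rw [show (-Qminus : Matrix (Fin d) (Fin d) ℝ) = 0 - Qminus by rw [zero_sub],
          frob_sub_right]
        simp [frob_eq_sum]
      rw [hP, frob_smul_left]
      have : frob M0star Qminus ≤ 0 := by linarith
      nlinarith [(by positivity : (0:ℝ) < (lam0 + lam1) / (2 * lam1))]
    have hself := frob_self_nonneg (Qplus - P)
    rw [hexp, frob_sub_left, frob_sub_right, frob_sub_right] at hself
    linarith [horth, t1, t2, t4]
  have hQplus : Qplus = P := by
    have := sub_eq_zero.mp hDzero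
    exact this
  have hQminus : Qminus = N := by
    have := hQeq
    rw [hQplus] at this
    exact add_left_cancel this
  refine ⟨hQplus, ?_⟩
  -- second identity
  have hrel : g1 = g0 + (lam1 - lam0) • M0star := by
    rw [hg0, hg1, gradP, gradP]
    ext i j
    simp only [Matrix.add_apply, Matrix.smul_apply, smul_eq_mul, Matrix.sum_apply]
    ring
  have hg1sq : frob g1 g1 = frob g0 g0 + (lam1 - lam0) ^ 2 * frob M0star M0star := by
    rw [hrel, frob_add_left, frob_add_right, frob_add_right, frob_smul_left,
      frob_smul_right, frob_smul_left, frob_smul_right, frob_comm M0star g0, h1]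
    ring
  have hNsq : frob Qminus Qminus = (1 / (2 * lam1)) ^ 2 * frob g0 g0 := by
    rw [hQminus, hN, frob_smul_left, frob_smul_right]
    ring
  rw [mul_pow, frobNorm_sq, frobNorm_sq, frobNorm_sq, hg1sq, hNsq]
  field_simp
  ring
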